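/- arXiv:2507.14530 — 4 statements merged into one kernel-verified Lean document; each statement's English description precedes it below -/
import Mathlib

section
/- Let f: Γ → Γ' be a morphism of graphs and let (X,p,Γ') be an F-graph bundle. If the image f(Γ) is a tree, then the pullback f^*(X,p,Γ') is a trivial F-graph bundle. -/
open Classical Matrix Kronecker

universe u

noncomputable section

/-- A morphism of graphs: adjacent vertices are mapped to adjacent or equal vertices. -/
def IsGraphMorphism {V W : Type*} (G : SimpleGraph V) (H : SimpleGraph W) (f : V → W) : Prop :=
  ∀ ⦃a b : V⦄, G.Adj a b → H.Adj (f a) (f b) ∨ f a = f b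

/-- The graph `X̃` obtained from `X` by deleting the edges lying inside fibers of `p`. -/
def delFiberEdges {VX VB : Type*} (X : SimpleGraph VX) (p : VX → VB) : SimpleGraph VX where
  Adj a b := X.Adj a b ∧ p a ≠ p b
  symm := by
    constructor
    intro a b h
    exact ⟨h.1.symm, Ne.symm h.2⟩
  loopless := by
    constructor
    intro a h
    exact X.loopless.irrefl a h.1

/-- `(X, p, B)` is an `F`-graph bundle. -/
structure IsGraphBundle {VF VX VB : Type*} (F : SimpleGraph VF) (X : SimpleGraph VX)
    (p : VX → VB) (B : SimpleGraph VB) : Prop where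
  morphism : IsGraphMorphism X B p
  surj : Function.Surjective p
  fiber_iso : ∀ v : VB, Nonempty ((X.induce (p ⁻¹' {v})) ≃g F)
  fiber_card : ∀ v : VB, Nat.card (p ⁻¹' {v}) = Nat.card VF
  covering : ∀ x : VX,
    Set.BijOn p ((delFiberEdges X p).neighborSet x) (B.neighborSet (p x))
  transport : ∀ ⦃v w : VB⦄, B.Adj v w →
    ∃ ψ : (X.induce (p ⁻¹' {v})) ≃g (X.induce (p ⁻¹' {w})),
      ∀ x : (p ⁻¹' {v}), X.Adj x.1 (ψ x).1

/-- Vertices of the pullback graph. -/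
abbrev PullbackVert {VB VX VC : Type*} (f : VB → VC) (p : VX → VC) :=
  {a : VB × VX // f a.1 = p a.2}

/-- The total space of the pullback of the bundle `(X, p, C)` along `f : B → C`. -/
def pullbackGraph {VB VX VC : Type*} (B : SimpleGraph VB) (X : SimpleGraph VX)
    (f : VB → VC) (p : VX → VC) (C : SimpleGraph VC) :
    SimpleGraph (PullbackVert f p) where
  Adj a b :=
    (a.1.1 = b.1.1 ∧ X.Adj a.1.2 b.1.2) ∨
    (B.Adj a.1.1 b.1.1 ∧ f a.1.1 = f b.1.1 ∧ a.1.2 = b.1.2) ∨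
    (B.Adj a.1.1 b.1.1 ∧ C.Adj (f a.1.1) (f b.1.1) ∧ X.Adj a.1.2 b.1.2)
  symm := by
    constructor
    rintro a b (⟨h1, h2⟩ | ⟨h1, h2, h3⟩ | ⟨h1, h2, h3⟩)
    · exact Or.inl ⟨h1.symm, h2.symm⟩
    · exact Or.inr (Or.inl ⟨h1.symm, h2.symm, h3.symm⟩)
    · exact Or.inr (Or.inr ⟨h1.symm, h2.symm, h3.symm⟩)
  loopless := by
    constructor
    rintro a (⟨_, h⟩ | ⟨h, _⟩ | ⟨h, _⟩)
    · exact X.loopless.irrefl _ h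
    · exact B.loopless.irrefl _ h
    · exact B.loopless.irrefl _ h

/-- The projection of the pullback bundle. -/
def pullbackProj {VB VX VC : Type*} (f : VB → VC) (p : VX → VC) :
    PullbackVert f p → VB := fun a => a.1.1

/-- Two graph bundles over the same base are equivalent. -/
def BundlesEquiv {VX VY VB : Type*} (X : SimpleGraph VX) (p : VX → VB)
    (Y : SimpleGraph VY) (q : VY → VB) : Prop :=
  ∃ Φ : X ≃g Y, ∀ x, q (Φ x) = p x

/-- A graph bundle is trivial if it is equivalent to `(B □ F, π, B)` with `π (v, f) = v`. -/
def IsTrivialBundle {VF VX VB : Type*} (F : SimpleGraph VF) (X : SimpleGraph VX)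
    (p : VX → VB) (B : SimpleGraph VB) : Prop :=
  ∃ Φ : X ≃g (B.boxProd F), ∀ x, (Φ x).1 = p x

/-- An `F`-voltage function on `B`. -/
structure VoltageFunction {VB VF : Type*} (B : SimpleGraph VB) (F : SimpleGraph VF) where
  volt : VB → VB → (F ≃g F)
  volt_symm : ∀ v w, volt w v = (volt v w).symm

/-- The graph `B ×_φ F` associated with a voltage function. -/
def voltageGraph {VB VF : Type*} (B : SimpleGraph VB) (F : SimpleGraph VF)
    (φ : VoltageFunction B F) : SimpleGraph (VB × VF) where
  Adj a b := (B.Adj a.1 b.1 ∧ b.2 = φ.volt a.1 b.1 a.2) ∨ (a.1 = b.1 ∧ F.Adj a.2 b.2)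
  symm := by
    constructor
    rintro a b (⟨h1, h2⟩ | ⟨h1, h2⟩)
    · refine Or.inl ⟨h1.symm, ?_⟩
      rw [φ.volt_symm, h2, RelIso.symm_apply_apply]
    · exact Or.inr ⟨h1.symm, h2.symm⟩
  loopless := by
    constructor
    rintro a (⟨h, _⟩ | ⟨_, h⟩)
    · exact B.loopless.irrefl _ h
    · exact F.loopless.irrefl _ h

/-- The pullback of a voltage function along a graph morphism. -/
def pullbackVoltage {VB VC VF : Type*} (B : SimpleGraph VB) (C : SimpleGraph VC)
    (F : SimpleGraph VF) (f : VB → VC) (φ : VoltageFunction C F) : VoltageFunction B F where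
  volt v w := if f v = f w then RelIso.refl _ else φ.volt (f v) (f w)
  volt_symm v w := by
    by_cases h : f v = f w
    · rw [if_pos h, if_pos h.symm]
      rfl
    · rw [if_neg h, if_neg (fun hh : f w = f v => h hh.symm), φ.volt_symm]
/-- Adjacency matrix (over `ℝ`). -/
def adjMat {V : Type*} (G : SimpleGraph V) : Matrix V V ℝ :=
  Matrix.of fun a b => if G.Adj a b then 1 else 0

/-- Permutation matrix of an automorphism of `F`. -/
def permMat {VF : Type*} {F : SimpleGraph VF} (ψ : F ≃g F) : Matrix VF VF ℝ :=
  Matrix.of fun a b => if b = ψ a then 1 else 0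

/-- The matrix `M_f` of a map of vertex sets. -/
def morMat {VB VC : Type*} (f : VB → VC) : Matrix VC VB ℝ :=
  Matrix.of fun c b => if f b = c then 1 else 0

/-- The matrix `A_B(ψ)` of a voltage function. -/
def voltMat {VB VF : Type*} {B : SimpleGraph VB} {F : SimpleGraph VF}
    (φ : VoltageFunction B F) (ψ : F ≃g F) : Matrix VB VB ℝ :=
  Matrix.of fun v w => if B.Adj v w ∧ φ.volt v w = ψ then 1 else 0

instance instFiniteGraphIso {VF : Type*} [Finite VF] (F : SimpleGraph VF) :
    Finite (F ≃g F) :=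
  Finite.of_injective (fun ψ => (ψ.toEquiv : VF ≃ VF)) (fun a b h => by
    cases a; cases b; simpa using h)

noncomputable instance instFintypeGraphIso {VF : Type*} [Finite VF] (F : SimpleGraph VF) :
    Fintype (F ≃g F) :=
  Fintype.ofFinite _

/-- The image graph `f(Γ)` of a graph morphism. -/
def imageGraph {VB VC : Type*} (B : SimpleGraph VB) (f : VB → VC) :
    SimpleGraph (Set.range f) where
  Adj a b := a.1 ≠ b.1 ∧ ∃ v w, B.Adj v w ∧ f v = a.1 ∧ f w = b.1
  symm := by
    constructor
    rintro a b ⟨hne, v, w, h, hv, hw⟩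
    exact ⟨hne.symm, w, v, h.symm, hw, hv⟩
  loopless := by
    constructor
    rintro a ⟨hne, -⟩
    exact hne rfl

/-- The Cayley graph of a group with respect to a set of generators. -/
def cayleyGraph {G : Type*} [Group G] (S : Set G) : SimpleGraph G :=
  SimpleGraph.fromRel (fun x y => ∃ s ∈ S, y = x * s)

/-- The subdirect product of two groups with amalgamated factor group `B`. -/
def subdirSubgroup {A₁ A₂ B : Type*} [Group A₁] [Group A₂] [Group B]
    (φ₁ : A₁ →* B) (φ₂ : A₂ →* B) : Subgroup (A₁ × A₂) where
  carrier := {a : A₁ × A₂ | φ₁ a.1 = φ₂ a.2}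
  one_mem' := by simp
  mul_mem' := by
    intro a b ha hb
    simp only [Set.mem_setOf_eq, Prod.fst_mul, Prod.snd_mul, _root_.map_mul] at *
    rw [ha, hb]
  inv_mem' := by
    intro a ha
    simp only [Set.mem_setOf_eq, Prod.fst_inv, Prod.snd_inv, _root_.map_inv] at *
    rw [ha]

section PullbackAux

open SimpleGraph

variable {VF VX VB VC : Type*}
variable {F : SimpleGraph VF} {X : SimpleGraph VX} {C : SimpleGraph VC} {B : SimpleGraph VB}
variable {p : VX → VC} {f : VB → VC}

lemma imageAdj_cadj (hf : IsGraphMorphism B C f) {c c' : Set.range f}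
    (h : (imageGraph B f).Adj c c') : C.Adj c.1 c'.1 := by
  obtain ⟨hne, v, w, hvw, hv, hw⟩ := h
  rcases hf hvw with h' | h'
  · rwa [hv, hw] at h'
  · exact absurd (by rw [← hv, ← hw, h']) hne

/-- chosen transport isomorphism along an edge of `C`. -/
noncomputable def psiEdge (hX : IsGraphBundle F X p C) {c c' : VC} (h : C.Adj c c') :
    (X.induce (p ⁻¹' {c})) ≃g (X.induce (p ⁻¹' {c'})) :=
  (hX.transport h).choose

lemma psiEdge_adj (hX : IsGraphBundle F X p C) {c c' : VC} (h : C.Adj c c')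
    (x : p ⁻¹' {c}) : X.Adj x.1 ((psiEdge hX h) x).1 :=
  (hX.transport h).choose_spec x

/-- transport along a walk in the image graph. -/
noncomputable def transWalk (hf : IsGraphMorphism B C f) (hX : IsGraphBundle F X p C) :
    ∀ {c c' : Set.range f}, (imageGraph B f).Walk c c' →
      ((X.induce (p ⁻¹' {c.1})) ≃g (X.induce (p ⁻¹' {c'.1})))
  | _, _, SimpleGraph.Walk.nil => RelIso.refl _
  | _, _, SimpleGraph.Walk.cons h w =>
      (psiEdge hX (imageAdj_cadj hf h)).trans (transWalk hf hX w)

lemma transWalk_append (hf : IsGraphMorphism B C f) (hX : IsGraphBundle F X p C)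
    {c c' c'' : Set.range f} (w : (imageGraph B f).Walk c c')
    (w' : (imageGraph B f).Walk c' c'') (x : p ⁻¹' {c.1}) :
    transWalk hf hX (w.append w') x = transWalk hf hX w' (transWalk hf hX w x) := by
  induction w with
  | nil => rfl
  | cons h q ih =>
    rw [SimpleGraph.Walk.cons_append]
    exact ih _ _

lemma transWalk_concat (hf : IsGraphMorphism B C f) (hX : IsGraphBundle F X p C)
    {c c' c'' : Set.range f} (w : (imageGraph B f).Walk c c')
    (h : (imageGraph B f).Adj c' c'') (x : p ⁻¹' {c.1}) :
    transWalk hf hX (w.concat h) x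
      = psiEdge hX (imageAdj_cadj hf h) (transWalk hf hX w x) := by
  rw [SimpleGraph.Walk.concat_eq_append, transWalk_append]
  rfl

lemma cross_unique (hX : IsGraphBundle F X p C) {x y y' : VX}
    (h1 : X.Adj x y) (h2 : X.Adj x y') (hne : p y ≠ p x) (he : p y = p y') : y = y' := by
  have m1 : y ∈ (delFiberEdges X p).neighborSet x := ⟨h1, fun hh => hne hh.symm⟩
  have m2 : y' ∈ (delFiberEdges X p).neighborSet x :=
    ⟨h2, fun hh => hne (he.trans hh.symm)⟩
  exact (hX.covering x).injOn m1 m2 he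

lemma exists_theta (hf : IsGraphMorphism B C f) (hX : IsGraphBundle F X p C)
    (htree : (imageGraph B f).IsTree) :
    ∃ θ : ∀ c : Set.range f, ((X.induce (p ⁻¹' {c.1})) ≃g F),
      ∀ ⦃c c' : Set.range f⦄, (imageGraph B f).Adj c c' →
        ∀ (x : p ⁻¹' {c.1}) (y : p ⁻¹' {c'.1}), (X.Adj x.1 y.1 ↔ θ c' y = θ c x) := by
  obtain ⟨r⟩ : Nonempty (Set.range f) := htree.isConnected.nonempty
  have hEU := htree.existsUnique_path
  set T := imageGraph B f with hT
  let P : ∀ c : Set.range f, T.Walk r c := fun c => (hEU r c).choose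
  have hP : ∀ c, (P c).IsPath := fun c => (hEU r c).choose_spec.1
  have hPu : ∀ (c) (q : T.Walk r c), q.IsPath → q = P c :=
    fun c q hq => (hEU r c).choose_spec.2 q hq
  let θ0 : (X.induce (p ⁻¹' {r.1})) ≃g F := (hX.fiber_iso r.1).some
  have key : ∀ ⦃c c' : Set.range f⦄, T.Adj c c' →
      ∃ ψ : (X.induce (p ⁻¹' {c.1})) ≃g (X.induce (p ⁻¹' {c'.1})),
        (∀ x, X.Adj x.1 (ψ x).1) ∧
        ∀ x, (transWalk hf hX (P c')).symm (ψ x) = (transWalk hf hX (P c)).symm x := by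
    intro c c' h
    by_cases hm : c' ∈ (P c).support
    · have hcc : c ≠ c' := fun he => h.1 (congrArg Subtype.val he)
      have hcn : c ∉ ((P c).takeUntil c' hm).support := by
        intro hc
        have hnodup := (hP c).support_nodup
        rw [← SimpleGraph.Walk.take_spec (P c) hm, SimpleGraph.Walk.support_append] at hnodup
        have hcd : c ∈ ((P c).dropUntil c' hm).support.tail := by
          have hend : c ∈ ((P c).dropUntil c' hm).support :=
            SimpleGraph.Walk.end_mem_support _
          rw [SimpleGraph.Walk.support_eq_cons] at hend
          rcases List.mem_cons.mp hend with h1 | h1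
          · exact absurd h1.symm hcc.symm
          · exact h1
        exact (List.disjoint_of_nodup_append hnodup) hc hcd
      have hR : (((P c).takeUntil c' hm).concat h.symm).IsPath := by
        rw [← SimpleGraph.Walk.isPath_reverse_iff, SimpleGraph.Walk.reverse_concat,
          SimpleGraph.Walk.cons_isPath_iff]
        refine ⟨by rw [SimpleGraph.Walk.isPath_reverse_iff]; exact (hP c).takeUntil hm, ?_⟩
        rw [SimpleGraph.Walk.support_reverse]
        simpa using hcn
      have hQP : (P c).takeUntil c' hm = P c' := hPu c' _ ((hP c).takeUntil hm)
      have hPc : P c = (P c').concat h.symm := by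
        rw [← hQP]
        exact (hPu c _ hR).symm
      refine ⟨(psiEdge hX (imageAdj_cadj hf h.symm)).symm, ?_, ?_⟩
      · intro x
        have hadj := psiEdge_adj hX (imageAdj_cadj hf h.symm)
          ((psiEdge hX (imageAdj_cadj hf h.symm)).symm x)
        rw [RelIso.apply_symm_apply] at hadj
        exact hadj.symm
      · intro x
        apply (transWalk hf hX (P c)).injective
        rw [RelIso.apply_symm_apply]
        conv_lhs => rw [hPc]
        rw [transWalk_concat, RelIso.apply_symm_apply, RelIso.apply_symm_apply]
    · have hR : ((P c).concat h).IsPath := by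
        rw [← SimpleGraph.Walk.isPath_reverse_iff, SimpleGraph.Walk.reverse_concat,
          SimpleGraph.Walk.cons_isPath_iff]
        refine ⟨by rw [SimpleGraph.Walk.isPath_reverse_iff]; exact hP c, ?_⟩
        rw [SimpleGraph.Walk.support_reverse]
        simpa using hm
      have hPc' : P c' = (P c).concat h := (hPu c' _ hR).symm
      refine ⟨psiEdge hX (imageAdj_cadj hf h), fun x => psiEdge_adj hX _ x, ?_⟩
      intro x
      apply (transWalk hf hX (P c')).injective
      rw [RelIso.apply_symm_apply]
      conv_rhs => rw [hPc']
      rw [transWalk_concat, RelIso.apply_symm_apply]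
  refine ⟨fun c => (transWalk hf hX (P c)).symm.trans θ0, ?_⟩
  intro c c' h x y
  obtain ⟨ψ, hψa, hψθ⟩ := key h
  show X.Adj x.1 y.1 ↔
    θ0 ((transWalk hf hX (P c')).symm y) = θ0 ((transWalk hf hX (P c)).symm x)
  constructor
  · intro hxy
    have h1 : p y.1 = p (ψ x).1 := by
      have hy := y.2
      have hpx := (ψ x).2
      rw [Set.mem_preimage, Set.mem_singleton_iff] at hy hpx
      rw [hy, hpx]
    have hne : p y.1 ≠ p x.1 := by
      have hy := y.2
      have hx := x.2
      rw [Set.mem_preimage, Set.mem_singleton_iff] at hy hx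
      rw [hy, hx]
      exact fun he => h.1 he.symm
    have heq : y = ψ x := Subtype.ext (cross_unique hX hxy (hψa x) hne h1)
    rw [heq, hψθ]
  · intro ht
    have h2 : (transWalk hf hX (P c')).symm y = (transWalk hf hX (P c')).symm (ψ x) := by
      apply θ0.injective
      rw [ht, hψθ]
    have heq : y = ψ x := (transWalk hf hX (P c')).symm.injective h2
    rw [heq]
    exact hψa x

end PullbackAux

/-- if the image `f(Γ)` is a tree, then the pullback bundle is trivial. -/
theorem pullback_tree_trivial
    {VF VX VB VC : Type*} [Fintype VF] [Fintype VX] [Fintype VB] [Fintype VC]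
    (F : SimpleGraph VF) (X : SimpleGraph VX) (C : SimpleGraph VC) (B : SimpleGraph VB)
    (p : VX → VC) (f : VB → VC)
    (hf : IsGraphMorphism B C f) (hX : IsGraphBundle F X p C)
    (htree : (imageGraph B f).IsTree) :
    IsTrivialBundle F (pullbackGraph B X f p C) (pullbackProj f p) B := by
  obtain ⟨θ, hθ⟩ := exists_theta hf hX htree
  have memfib : ∀ a : PullbackVert f p, a.1.2 ∈ p ⁻¹' {f a.1.1} := fun a => by
    rw [Set.mem_preimage, Set.mem_singleton_iff]; exact a.2.symm
  let cOf : VB → Set.range f := fun v => ⟨f v, v, rfl⟩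
  have fiber_iff : ∀ (c : Set.range f) (x y : ↥(p ⁻¹' {c.1})),
      X.Adj x.1 y.1 ↔ F.Adj (θ c x) (θ c y) := by
    intro c x y
    constructor
    · intro hxy
      exact (θ c).map_rel_iff.mpr (by simpa using hxy)
    · intro hF
      simpa using (θ c).map_rel_iff.mp hF
  have fiber_iff' : ∀ {c c' : Set.range f} (_ : c = c') (x : ↥(p ⁻¹' {c.1}))
      (y : ↥(p ⁻¹' {c'.1})), X.Adj x.1 y.1 ↔ F.Adj (θ c x) (θ c' y) := by
    rintro c c' rfl x y
    exact fiber_iff c x y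
  have theta_congr : ∀ {c c' : Set.range f} (_ : c = c') (x : ↥(p ⁻¹' {c.1}))
      (y : ↥(p ⁻¹' {c'.1})), x.1 = y.1 → θ c x = θ c' y := by
    rintro c c' rfl x y hxy
    rw [Subtype.ext hxy]
  have theta_inj : ∀ {c c' : Set.range f} (_ : c = c') (x : ↥(p ⁻¹' {c.1}))
      (y : ↥(p ⁻¹' {c'.1})), θ c x = θ c' y → x.1 = y.1 := by
    rintro c c' rfl x y hxy
    rw [(θ c).injective hxy]
  let e : PullbackVert f p ≃ VB × VF :=
  { toFun := fun a => (a.1.1, θ (cOf a.1.1) ⟨a.1.2, memfib a⟩)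
    invFun := fun b => ⟨(b.1, ((θ (cOf b.1)).symm b.2).1), by
      have h2 := ((θ (cOf b.1)).symm b.2).2
      rw [Set.mem_preimage, Set.mem_singleton_iff] at h2
      exact h2.symm⟩
    left_inv := fun a => Subtype.ext (Prod.ext rfl
      (congrArg Subtype.val ((θ (cOf a.1.1)).symm_apply_apply ⟨a.1.2, memfib a⟩)))
    right_inv := fun b => Prod.ext rfl (by
      show (θ (cOf b.1)) ⟨((θ (cOf b.1)).symm b.2).1, _⟩ = b.2
      rw [Subtype.coe_eta, RelIso.apply_symm_apply]) }
  refine ⟨⟨e, ?_⟩, fun x => rfl⟩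
  rintro ⟨⟨v, x⟩, ha⟩ ⟨⟨w, y⟩, hb⟩
  show (B.boxProd F).Adj
      (v, θ (cOf v) ⟨x, memfib ⟨(v, x), ha⟩⟩) (w, θ (cOf w) ⟨y, memfib ⟨(w, y), hb⟩⟩) ↔
    ((v = w ∧ X.Adj x y) ∨ (B.Adj v w ∧ f v = f w ∧ x = y) ∨
      (B.Adj v w ∧ C.Adj (f v) (f w) ∧ X.Adj x y))
  set xs : ↥(p ⁻¹' {f v}) := ⟨x, memfib ⟨(v, x), ha⟩⟩ with hxs
  set ys : ↥(p ⁻¹' {f w}) := ⟨y, memfib ⟨(w, y), hb⟩⟩ with hys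
  rw [SimpleGraph.boxProd_adj]
  dsimp only
  constructor
  · rintro (⟨hvw, hXY⟩ | ⟨hF, hvw⟩)
    · by_cases hfvw : f v = f w
      · have hval := theta_inj (c := cOf v) (c' := cOf w) (Subtype.ext hfvw) xs ys hXY
        exact Or.inr (Or.inl ⟨hvw, hfvw, hval⟩)
      · have hC : C.Adj (f v) (f w) := (hf hvw).resolve_right hfvw
        have hedge : (imageGraph B f).Adj (cOf v) (cOf w) := ⟨hfvw, v, w, hvw, rfl, rfl⟩
        exact Or.inr (Or.inr ⟨hvw, hC, (hθ hedge xs ys).mpr hXY.symm⟩)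
    · exact Or.inl ⟨hvw, (fiber_iff' (c := cOf v) (c' := cOf w) (Subtype.ext (congrArg f hvw)) xs ys).mpr hF⟩
  · rintro (⟨hvw, hXY⟩ | ⟨h1, h2, h3⟩ | ⟨h1, h2, h3⟩)
    · exact Or.inr ⟨(fiber_iff' (c := cOf v) (c' := cOf w) (Subtype.ext (congrArg f hvw)) xs ys).mp hXY, hvw⟩
    · have hval := theta_congr (c := cOf v) (c' := cOf w) (Subtype.ext h2) xs ys h3
      exact Or.inl ⟨h1, hval⟩
    · have hedge : (imageGraph B f).Adj (cOf v) (cOf w) := ⟨h2.ne, v, w, h1, rfl, rfl⟩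
      exact Or.inl ⟨h1, ((hθ hedge xs ys).mp h3).symm⟩
end
end

section
/- For i = 1,2 let φᵢ be an Fᵢ-voltage function on Γ and let (Xᵢ,pᵢ,Γ) be the Fᵢ-graph bundle with Xᵢ = Γ ×_{φᵢ} Fᵢ and pᵢ(v,f) = v. Then, with respect to fixed vertex orders and lexicographical orders on products, the adjacency matrix of the total space of the subdirect product satisfies A_{X₁ ⊞ X₂} = Σ_{ψ¹ ∈ Aut(F₁)} Σ_{ψ² ∈ Aut(F₂)} A_Γ(ψ¹,ψ²) ⊗ perm(ψ¹) ⊗ perm(ψ²) + I_{|V_Γ|} ⊗ A_{F₁} ⊗ I_{|V_{F₂}|} + I_{|V_Γ|} ⊗ I_{|V_{F₁}|} ⊗ A_{F₂}, where A_Γ(ψ¹,ψ²) is the matrix indexed by V_Γ whose (v,w)-entry is 1 if v ∼ w, φ₁(v,w) = ψ¹ and φ₂(v,w) = ψ², and 0 otherwise. -/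
open Classical Matrix Kronecker

universe u

noncomputable section

/-- adjacency matrix of the total space of the subdirect product of two
voltage-function bundles, on vertices identified with triples. -/
theorem adjMat_subdir_voltage
    {VB VF₁ VF₂ : Type*} [Fintype VB] [Fintype VF₁] [Fintype VF₂]
    [DecidableEq VB] [DecidableEq VF₁] [DecidableEq VF₂]
    (B : SimpleGraph VB) (F₁ : SimpleGraph VF₁) (F₂ : SimpleGraph VF₂)
    (φ₁ : VoltageFunction B F₁) (φ₂ : VoltageFunction B F₂) :
    adjMat (SimpleGraph.comap
        (fun t : VB × VF₁ × VF₂ =>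
          (⟨((t.1, t.2.1), (t.1, t.2.2)), rfl⟩ :
            PullbackVert (Prod.fst : VB × VF₁ → VB) (Prod.fst : VB × VF₂ → VB)))
        (pullbackGraph (voltageGraph B F₁ φ₁) (voltageGraph B F₂ φ₂)
          Prod.fst Prod.fst B)) =
      (∑ ψ₁ : F₁ ≃g F₁, ∑ ψ₂ : F₂ ≃g F₂,
        (Matrix.of fun v w =>
            if B.Adj v w ∧ φ₁.volt v w = ψ₁ ∧ φ₂.volt v w = ψ₂ then (1 : ℝ) else 0) ⊗ₖ
          (permMat ψ₁ ⊗ₖ permMat ψ₂))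
      + (1 : Matrix VB VB ℝ) ⊗ₖ (adjMat F₁ ⊗ₖ (1 : Matrix VF₂ VF₂ ℝ))
      + (1 : Matrix VB VB ℝ) ⊗ₖ ((1 : Matrix VF₁ VF₁ ℝ) ⊗ₖ adjMat F₂) := by
  ext ⟨v, f₁, f₂⟩ ⟨w, g₁, g₂⟩
  simp only [adjMat, SimpleGraph.comap_adj, pullbackGraph, voltageGraph, Matrix.add_apply,
    Matrix.sum_apply, Matrix.kroneckerMap_apply, Matrix.of_apply, permMat, Matrix.one_apply,
    Prod.mk.injEq]
  rw [Fintype.sum_eq_single (φ₁.volt v w) ?h1]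
  rw [Fintype.sum_eq_single (φ₂.volt v w) ?h2]
  case h1 => intro ψ₁ hne; simp [Ne.symm hne]
  case h2 => intro ψ₂ hne; simp [Ne.symm hne]
  by_cases hvw : v = w
  · subst hvw
    have hB : ¬ B.Adj v v := B.loopless.irrefl v
    by_cases h1 : f₁ = g₁ <;> by_cases h2 : f₂ = g₂ <;>
      by_cases hA1 : F₁.Adj f₁ g₁ <;> by_cases hA2 : F₂.Adj f₂ g₂ <;>
        simp_all [F₁.ne_of_adj, F₂.ne_of_adj]
  · by_cases hB : B.Adj v w
    · by_cases h1 : g₁ = φ₁.volt v w f₁ <;> by_cases h2 : g₂ = φ₂.volt v w f₂ <;>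
        simp_all
    · simp_all
end
end

section
/- Let (X,p,Γ) be an F-graph bundle. Then the number of edges of the total space X equals the number of edges of the Cartesian product Γ □ F, namely |E_X| = |E_Γ|·|V_F| + |V_Γ|·|E_F|. In particular, any two F-graph bundles over the same base Γ have the same number of edges. -/
open Classical Matrix Kronecker

universe u

noncomputable section

/-- Handshake lemma in `ncard` form. -/
lemma hand_ncard {V : Type*} [Fintype V] (G : SimpleGraph V) :
    ∑ v, (G.neighborSet v).ncard = 2 * G.edgeSet.ncard := by
  classical
  have h1 : G.edgeSet.ncard = G.edgeFinset.card := by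
    rw [← SimpleGraph.coe_edgeFinset, Set.ncard_coe_finset]
  have h2 : ∀ v, (G.neighborSet v).ncard = G.degree v := by
    intro v
    rw [← SimpleGraph.card_neighborSet_eq_degree, ← Nat.card_coe_set_eq,
      Nat.card_eq_fintype_card]
  simp_rw [h2, h1]
  exact G.sum_degrees_eq_twice_card_edges

/-- The graph of edges lying inside fibers of `p`. -/
def fiberGraph {VX VB : Type*} (X : SimpleGraph VX) (p : VX → VB) : SimpleGraph VX where
  Adj a b := X.Adj a b ∧ p a = p b
  symm := ⟨fun _ _ h => ⟨h.1.symm, h.2.symm⟩⟩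
  loopless := ⟨fun a h => X.loopless.irrefl a h.1⟩

lemma nb_split {VX VB : Type*} [Fintype VX] (X : SimpleGraph VX) (p : VX → VB) (x : VX) :
    (X.neighborSet x).ncard =
      ((delFiberEdges X p).neighborSet x).ncard + ((fiberGraph X p).neighborSet x).ncard := by
  classical
  have hu : X.neighborSet x =
      (delFiberEdges X p).neighborSet x ∪ (fiberGraph X p).neighborSet x := by
    ext y
    simp only [SimpleGraph.mem_neighborSet, Set.mem_union]
    constructor
    · intro h
      by_cases hp : p x = p y
      · exact Or.inr ⟨h, hp⟩
      · exact Or.inl ⟨h, hp⟩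
    · rintro (h | h) <;> exact h.1
  rw [hu, Set.ncard_union_eq ?_ (Set.toFinite _) (Set.toFinite _)]
  exact Set.disjoint_left.mpr fun y h1 h2 => h1.2 h2.2

lemma bundle_count {VF VX VB : Type*} [Fintype VF] [Fintype VX] [Fintype VB]
    (F : SimpleGraph VF) (X : SimpleGraph VX) (B : SimpleGraph VB) (p : VX → VB)
    (hX : IsGraphBundle F X p B) :
    X.edgeSet.ncard = B.edgeSet.ncard * Fintype.card VF + Fintype.card VB * F.edgeSet.ncard := by
  classical
  -- the deleted-fiber neighborhoods have the same size as base neighborhoods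
  have hdel : ∀ x : VX,
      ((delFiberEdges X p).neighborSet x).ncard = (B.neighborSet (p x)).ncard := by
    intro x
    have h := hX.covering x
    rw [← h.image_eq, Set.ncard_image_of_injOn h.injOn]
  -- fiber cardinalities
  have hcard : ∀ v : VB, Fintype.card {a : VX // p a = v} = Fintype.card VF := by
    intro v
    have h := hX.fiber_card v
    have h2 : Fintype.card ↥(p ⁻¹' {v}) = Fintype.card VF := by
      simpa [Nat.card_eq_fintype_card] using h
    rw [← h2]
    exact Fintype.card_congr (Equiv.subtypeEquivRight (fun a => by
      simp [Set.mem_preimage, Set.mem_singleton_iff]))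
  -- fiber neighborhood sizes transported to F
  have hfib : ∀ (v : VB) (z : {a : VX // p a = v}),
      ((fiberGraph X p).neighborSet z.1).ncard =
        (F.neighborSet ((hX.fiber_iso v).some ⟨z.1, z.2⟩)).ncard := by
    intro v z
    have hz : (z.1 : VX) ∈ p ⁻¹' {v} := z.2
    have e1 : ((fiberGraph X p).neighborSet z.1) ≃
        ((X.induce (p ⁻¹' {v})).neighborSet ⟨z.1, hz⟩) :=
      { toFun := fun y => ⟨⟨y.1, show p y.1 = v from y.2.2.symm.trans z.2⟩, y.2.1⟩
        invFun := fun w => ⟨w.1.1, ⟨w.2, by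
          have hw : p w.1.1 = v := w.1.2
          rw [z.2, hw]⟩⟩
        left_inv := fun _ => rfl
        right_inv := fun _ => rfl }
    have e2 := ((hX.fiber_iso v).some).mapNeighborSet ⟨z.1, hz⟩
    rw [← Nat.card_coe_set_eq, ← Nat.card_coe_set_eq]
    exact Nat.card_congr (e1.trans e2)
  have key := hand_ncard X
  have hsplit : ∑ x, (X.neighborSet x).ncard =
      (∑ x, ((delFiberEdges X p).neighborSet x).ncard) +
      ∑ x, ((fiberGraph X p).neighborSet x).ncard := by
    rw [← Finset.sum_add_distrib]
    exact Finset.sum_congr rfl fun x _ => nb_split X p x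
  have hsum1 : ∑ x, ((delFiberEdges X p).neighborSet x).ncard =
      Fintype.card VF * (2 * B.edgeSet.ncard) := by
    calc ∑ x, ((delFiberEdges X p).neighborSet x).ncard
        = ∑ x, (B.neighborSet (p x)).ncard := Finset.sum_congr rfl fun x _ => hdel x
      _ = ∑ v, ∑ z : {a : VX // p a = v}, (B.neighborSet (p z.1)).ncard :=
          (Fintype.sum_fiberwise p _).symm
      _ = ∑ v, ∑ _z : {a : VX // p a = v}, (B.neighborSet v).ncard := by
          refine Finset.sum_congr rfl fun v _ => Finset.sum_congr rfl fun z _ => by rw [z.2]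
      _ = ∑ v, Fintype.card {a : VX // p a = v} * (B.neighborSet v).ncard := by
          simp only [Finset.sum_const, Finset.card_univ, smul_eq_mul]
      _ = ∑ v, Fintype.card VF * (B.neighborSet v).ncard := by
          refine Finset.sum_congr rfl fun v _ => by rw [hcard v]
      _ = Fintype.card VF * ∑ v, (B.neighborSet v).ncard := by rw [Finset.mul_sum]
      _ = Fintype.card VF * (2 * B.edgeSet.ncard) := by rw [hand_ncard B]
  have hsum2 : ∑ x, ((fiberGraph X p).neighborSet x).ncard =
      Fintype.card VB * (2 * F.edgeSet.ncard) := by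
    calc ∑ x, ((fiberGraph X p).neighborSet x).ncard
        = ∑ v, ∑ z : {a : VX // p a = v}, ((fiberGraph X p).neighborSet z.1).ncard :=
          (Fintype.sum_fiberwise p _).symm
      _ = ∑ v : VB, (2 * F.edgeSet.ncard) := by
          refine Finset.sum_congr rfl fun v _ => ?_
          calc ∑ z : {a : VX // p a = v}, ((fiberGraph X p).neighborSet z.1).ncard
              = ∑ z : {a : VX // p a = v},
                  (F.neighborSet ((hX.fiber_iso v).some ⟨z.1, z.2⟩)).ncard :=
              Finset.sum_congr rfl fun z _ => hfib v z
            _ = ∑ y : VF, (F.neighborSet y).ncard :=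
                Fintype.sum_equiv ((Equiv.subtypeEquivRight (fun a =>
                    ⟨fun h => h, fun h => h⟩ : ∀ a : VX,
                      p a = v ↔ a ∈ p ⁻¹' {v})).trans
                    ((hX.fiber_iso v).some).toEquiv) _ _ (fun z => rfl)
            _ = 2 * F.edgeSet.ncard := hand_ncard F
      _ = Fintype.card VB * (2 * F.edgeSet.ncard) := by
          simp only [Finset.sum_const, Finset.card_univ, smul_eq_mul]
  rw [hsplit, hsum1, hsum2] at key
  have h2 : 2 * X.edgeSet.ncard =
      2 * (B.edgeSet.ncard * Fintype.card VF + Fintype.card VB * F.edgeSet.ncard) := by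
    rw [← key]; ring
  omega

lemma boxProd_count {VB VF : Type*} [Fintype VB] [Fintype VF]
    (B : SimpleGraph VB) (F : SimpleGraph VF) :
    (B.boxProd F).edgeSet.ncard =
      B.edgeSet.ncard * Fintype.card VF + Fintype.card VB * F.edgeSet.ncard := by
  classical
  have key := hand_ncard (B.boxProd F)
  have hnb : ∀ x : VB × VF, ((B.boxProd F).neighborSet x).ncard =
      (B.neighborSet x.1).ncard + (F.neighborSet x.2).ncard := by
    intro x
    have h1 : ((B.boxProd F).neighborSet x).ncard = (B.boxProd F).degree x := by
      rw [← SimpleGraph.card_neighborSet_eq_degree, ← Nat.card_coe_set_eq,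
        Nat.card_eq_fintype_card]
    have h2 : (B.neighborSet x.1).ncard = B.degree x.1 := by
      rw [← SimpleGraph.card_neighborSet_eq_degree, ← Nat.card_coe_set_eq,
        Nat.card_eq_fintype_card]
    have h3 : (F.neighborSet x.2).ncard = F.degree x.2 := by
      rw [← SimpleGraph.card_neighborSet_eq_degree, ← Nat.card_coe_set_eq,
        Nat.card_eq_fintype_card]
    rw [h1, h2, h3, SimpleGraph.degree_boxProd]
  have hsum : ∑ x : VB × VF, ((B.boxProd F).neighborSet x).ncard =
      Fintype.card VF * (2 * B.edgeSet.ncard) + Fintype.card VB * (2 * F.edgeSet.ncard) := by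
    calc ∑ x : VB × VF, ((B.boxProd F).neighborSet x).ncard
        = ∑ x : VB × VF, ((B.neighborSet x.1).ncard + (F.neighborSet x.2).ncard) :=
          Finset.sum_congr rfl fun x _ => hnb x
      _ = (∑ x : VB × VF, (B.neighborSet x.1).ncard) +
          ∑ x : VB × VF, (F.neighborSet x.2).ncard := Finset.sum_add_distrib
      _ = Fintype.card VF * (2 * B.edgeSet.ncard) +
          Fintype.card VB * (2 * F.edgeSet.ncard) := by
          rw [Fintype.sum_prod_type, Fintype.sum_prod_type]
          have h1 : (∑ x : VB, ∑ _y : VF, (B.neighborSet x).ncard)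
              = Fintype.card VF * (2 * B.edgeSet.ncard) := by
            simp only [Finset.sum_const, Finset.card_univ, smul_eq_mul]
            rw [← Finset.mul_sum, hand_ncard B]
          have h2 : (∑ _x : VB, ∑ y : VF, (F.neighborSet y).ncard)
              = Fintype.card VB * (2 * F.edgeSet.ncard) := by
            simp only [hand_ncard F, Finset.sum_const, Finset.card_univ, smul_eq_mul]
          rw [h1, h2]
  rw [hsum] at key
  have h2 : 2 * (B.boxProd F).edgeSet.ncard =
      2 * (B.edgeSet.ncard * Fintype.card VF + Fintype.card VB * F.edgeSet.ncard) := by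
    rw [← key]; ring
  omega

/-- the total space of an `F`-graph bundle over `B` has as many edges as
`B □ F`, namely `|E_B|·|V_F| + |V_B|·|E_F|`; in particular any two `F`-graph bundles over
the same base have the same number of edges. -/
theorem bundle_edge_count {VF VX VB : Type u} [Fintype VF] [Fintype VX] [Fintype VB]
    (F : SimpleGraph VF) (X : SimpleGraph VX) (B : SimpleGraph VB) (p : VX → VB)
    (hX : IsGraphBundle F X p B) :
    X.edgeSet.ncard = (B.boxProd F).edgeSet.ncard ∧
    X.edgeSet.ncard = B.edgeSet.ncard * Fintype.card VF + Fintype.card VB * F.edgeSet.ncard ∧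
    ∀ {VY VZ : Type u} [Fintype VY] [Fintype VZ]
      (Y : SimpleGraph VY) (q : VY → VB) (Z : SimpleGraph VZ) (r : VZ → VB),
      IsGraphBundle F Y q B → IsGraphBundle F Z r B →
      Y.edgeSet.ncard = Z.edgeSet.ncard := by
  have h := bundle_count F X B p hX
  refine ⟨?_, h, ?_⟩
  · rw [h, boxProd_count]
  · intro VY VZ _ _ Y q Z r hY hZ
    rw [bundle_count F Y B q hY, bundle_count F Z B r hZ]
end
end

section
/- Let φ: A → B be a surjective homomorphism between finite groups and let S₁ be a symmetric generating set of B with 1_B ∉ S₁. Let S̃₁ be an S₁-transversal section of φ, let S₀ be an admissible symmetric generating set of ker(φ) with 1_A ∉ S₀, and set S_φ = S₀ ∪ S̃₁. Then the map φ: Cay(A,S_φ) → Cay(B,S₁) is a surjective morphism of graphs and the triple (Cay(A,S_φ), φ, Cay(B,S₁)) is a Cay(ker(φ),S₀)-graph bundle. -/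
open Classical Matrix Kronecker

universe u

noncomputable section

/-- Adjacency in a Cayley graph with symmetric generating set. -/
lemma cay_adj' {G : Type*} [Group G] {S : Set G} (hsym : ∀ s ∈ S, s⁻¹ ∈ S) (x y : G) :
    (cayleyGraph S).Adj x y ↔ x ≠ y ∧ ∃ s ∈ S, y = x * s := by
  simp only [cayleyGraph, SimpleGraph.fromRel_adj]
  constructor
  · rintro ⟨hne, (h | ⟨s, hs, rfl⟩)⟩
    · exact ⟨hne, h⟩
    · exact ⟨hne, s⁻¹, hsym s hs, by group⟩
  · rintro ⟨hne, h⟩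
    exact ⟨hne, Or.inl h⟩

lemma induce_adj' {V : Type*} (G : SimpleGraph V) (s : Set V) (a b : s) :
    (G.induce s).Adj a b ↔ G.Adj a.1 b.1 := by
  simp [SimpleGraph.induce]

lemma conj_shift' {A : Type*} [Group A] (x y t s : A) :
    y * t = x * t * s ↔ y = x * (t * s * t⁻¹) := by
  constructor
  · intro h
    exact mul_right_cancel (b := t) (by rw [h]; group)
  · intro h
    rw [h]; group

/-- The canonical bijection between a fiber of `φ` and its kernel. -/
def fiberEquiv' {A B : Type*} [Group A] [Group B] (φ : A →* B) (x₀ : A) :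
    (φ ⁻¹' {φ x₀} : Set A) ≃ φ.ker where
  toFun x := ⟨x₀⁻¹ * x.1, by
      have hx : φ x.1 = φ x₀ := x.2
      simp [MonoidHom.mem_ker, hx]⟩
  invFun k := ⟨x₀ * k.1, by
      have hk : φ k.1 = 1 := k.2
      simp [Set.mem_preimage, hk]⟩
  left_inv x := Subtype.ext (by simp)
  right_inv k := Subtype.ext (by simp)

/-- Right translation between fibers of `φ`. -/
def fiberShift' {A B : Type*} [Group A] [Group B] (φ : A →* B) (v : B) (t : A) :
    (φ ⁻¹' {v} : Set A) ≃ (φ ⁻¹' {v * φ t} : Set A) where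
  toFun x := ⟨x.1 * t, by
      have hx : φ x.1 = v := x.2
      simp [Set.mem_preimage, hx]⟩
  invFun y := ⟨y.1 * t⁻¹, by
      have hy : φ y.1 = v * φ t := y.2
      simp [Set.mem_preimage, hy, mul_assoc]⟩
  left_inv x := Subtype.ext (by simp)
  right_inv y := Subtype.ext (by simp)

/-- for a surjective homomorphism `φ : A → B` of finite groups and suitable
generating sets, `(Cay(A,S_φ), φ, Cay(B,S₁))` is a `Cay(ker φ, S₀)`-graph bundle. -/
theorem cayley_graphBundle
    {A B : Type*} [Group A] [Group B] [Fintype A] [Fintype B]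
    (φ : A →* B) (hsurj : Function.Surjective φ)
    (S₁ : Set B) (hS₁sym : ∀ s ∈ S₁, s⁻¹ ∈ S₁) (hS₁gen : Subgroup.closure S₁ = ⊤)
    (hS₁one : (1 : B) ∉ S₁)
    (T : Set A) (hTsym : ∀ s ∈ T, s⁻¹ ∈ T) (hT : Set.BijOn φ T S₁)
    (S₀ : Set A) (hS₀sym : ∀ s ∈ S₀, s⁻¹ ∈ S₀) (hS₀sub : S₀ ⊆ (φ.ker : Set A))
    (hS₀gen : Subgroup.closure S₀ = φ.ker) (hS₀one : (1 : A) ∉ S₀)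
    (hadm : ∀ (a : A), ∀ s ∈ S₀, a * s * a⁻¹ ∈ S₀) :
    IsGraphMorphism (cayleyGraph (S₀ ∪ T)) (cayleyGraph S₁) φ ∧
    Function.Surjective (φ : A → B) ∧
    IsGraphBundle (cayleyGraph {k : φ.ker | (k : A) ∈ S₀})
      (cayleyGraph (S₀ ∪ T)) (φ : A → B) (cayleyGraph S₁) := by
  classical
  have hSsym : ∀ s ∈ S₀ ∪ T, s⁻¹ ∈ S₀ ∪ T := by
    rintro s (hs | hs)
    · exact Or.inl (hS₀sym s hs)
    · exact Or.inr (hTsym s hs)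
  have hA := cay_adj' hSsym
  have hB := cay_adj' hS₁sym
  have hker : ∀ s ∈ S₀, φ s = 1 := fun s hs => hS₀sub hs
  have hTS : ∀ t ∈ T, φ t ∈ S₁ := fun t ht => hT.mapsTo ht
  have hT1 : ∀ t ∈ T, φ t ≠ 1 := fun t ht h => hS₁one (h ▸ hTS t ht)
  have hTne : ∀ t ∈ T, t ≠ (1 : A) := fun t ht h => hT1 t ht (by rw [h, _root_.map_one])
  have hAdjT : ∀ (x : A), ∀ t ∈ T, (cayleyGraph (S₀ ∪ T)).Adj x (x * t) := by
    intro x t ht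
    rw [hA]
    exact ⟨fun h => hTne t ht (left_eq_mul.mp h), t, Or.inr ht, rfl⟩
  have hfib : ∀ x y : A, φ x = φ y →
      ((cayleyGraph (S₀ ∪ T)).Adj x y ↔ x ≠ y ∧ ∃ s ∈ S₀, y = x * s) := by
    intro x y hxy
    rw [hA]
    refine and_congr_right fun hne => ⟨?_, ?_⟩
    · rintro ⟨s, hs | hs, rfl⟩
      · exact ⟨s, hs, rfl⟩
      · exfalso
        apply hT1 s hs
        rw [_root_.map_mul] at hxy
        exact (left_eq_mul.mp hxy)
    · rintro ⟨s, hs, rfl⟩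
      exact ⟨s, Or.inl hs, rfl⟩
  have hmor : IsGraphMorphism (cayleyGraph (S₀ ∪ T)) (cayleyGraph S₁) φ := by
    intro a b hab
    rw [hA] at hab
    obtain ⟨hne, s, hs | hs, rfl⟩ := hab
    · right
      rw [_root_.map_mul, hker s hs, mul_one]
    · left
      rw [hB, _root_.map_mul]
      exact ⟨fun h => hT1 s hs (left_eq_mul.mp h), φ s, hTS s hs, rfl⟩
  have hdel : ∀ x y : A, (delFiberEdges (cayleyGraph (S₀ ∪ T)) φ).Adj x y ↔
      ∃ t ∈ T, y = x * t := by
    intro x y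
    show ((cayleyGraph (S₀ ∪ T)).Adj x y ∧ φ x ≠ φ y) ↔ _
    constructor
    · rintro ⟨hadj, hne⟩
      rw [hA] at hadj
      obtain ⟨-, s, hs | hs, rfl⟩ := hadj
      · exact absurd (by rw [_root_.map_mul, hker s hs, mul_one]) hne
      · exact ⟨s, hs, rfl⟩
    · rintro ⟨t, ht, rfl⟩
      refine ⟨hAdjT x t ht, fun h => hT1 t ht ?_⟩
      rw [_root_.map_mul] at h
      exact left_eq_mul.mp h
  have hkerSym : ∀ s ∈ {k : φ.ker | (k : A) ∈ S₀}, s⁻¹ ∈ {k : φ.ker | (k : A) ∈ S₀} :=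
    fun s hs => hS₀sym s hs
  refine ⟨hmor, hsurj, ⟨hmor, hsurj, ?_, ?_, ?_, ?_⟩⟩
  · -- fiber_iso
    intro v
    obtain ⟨x₀, rfl⟩ := hsurj v
    refine ⟨{ toEquiv := fiberEquiv' φ x₀, map_rel_iff' := ?_ }⟩
    intro x y
    have hxy : φ x.1 = φ y.1 := by
      have hx : φ x.1 = φ x₀ := x.2
      have hy : φ y.1 = φ x₀ := y.2
      rw [hx, hy]
    rw [induce_adj', hfib x.1 y.1 hxy, cay_adj' hkerSym]
    constructor
    · rintro ⟨hne, s, hs, hseq⟩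
      have h2 : x₀⁻¹ * y.1 = x₀⁻¹ * x.1 * s.1 := congrArg Subtype.val hseq
      rw [mul_assoc] at h2
      refine ⟨fun h => hne (congrArg (fiberEquiv' φ x₀) (Subtype.ext h)), s.1, hs,
        mul_left_cancel h2⟩
    · rintro ⟨hne, s, hs, hseq⟩
      refine ⟨fun h => hne ?_, ⟨s, hS₀sub hs⟩, hs, Subtype.ext ?_⟩
      · have h2 : x₀⁻¹ * x.1 = x₀⁻¹ * y.1 := congrArg Subtype.val h
        exact mul_left_cancel h2
      · show x₀⁻¹ * y.1 = x₀⁻¹ * x.1 * s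
        rw [hseq, mul_assoc]
  · -- fiber_card
    intro v
    obtain ⟨x₀, rfl⟩ := hsurj v
    exact Nat.card_congr (fiberEquiv' φ x₀)
  · -- covering
    intro x
    refine ⟨?_, ?_, ?_⟩
    · intro y hy
      rw [SimpleGraph.mem_neighborSet, hdel] at hy
      obtain ⟨t, ht, rfl⟩ := hy
      rw [SimpleGraph.mem_neighborSet, hB, _root_.map_mul]
      exact ⟨fun h => hT1 t ht (left_eq_mul.mp h), φ t, hTS t ht, rfl⟩
    · intro y hy y' hy' heq
      rw [SimpleGraph.mem_neighborSet, hdel] at hy hy'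
      obtain ⟨t, ht, rfl⟩ := hy
      obtain ⟨t', ht', rfl⟩ := hy'
      rw [_root_.map_mul, _root_.map_mul] at heq
      rw [hT.injOn ht ht' (mul_left_cancel heq)]
    · intro w hw
      rw [SimpleGraph.mem_neighborSet, hB] at hw
      obtain ⟨hne, s₁, hs₁, rfl⟩ := hw
      obtain ⟨t, ht, rfl⟩ := hT.surjOn hs₁
      exact ⟨x * t, (hdel x (x * t)).mpr ⟨t, ht, rfl⟩, _root_.map_mul φ x t⟩
  · -- transport
    intro v w hvw
    rw [hB] at hvw
    obtain ⟨hne, s₁, hs₁, rfl⟩ := hvw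
    obtain ⟨t, ht, rfl⟩ := hT.surjOn hs₁
    refine ⟨{ toEquiv := fiberShift' φ v t, map_rel_iff' := ?_ }, ?_⟩
    · intro x y
      have hxy : φ x.1 = φ y.1 := by
        have hx : φ x.1 = v := x.2
        have hy : φ y.1 = v := y.2
        rw [hx, hy]
      have hxy' : φ (x.1 * t) = φ (y.1 * t) := by rw [_root_.map_mul, _root_.map_mul, hxy]
      rw [induce_adj', induce_adj']
      show (cayleyGraph (S₀ ∪ T)).Adj (x.1 * t) (y.1 * t) ↔
        (cayleyGraph (S₀ ∪ T)).Adj x.1 y.1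
      rw [hfib _ _ hxy', hfib _ _ hxy]
      constructor
      · rintro ⟨hne2, s, hs, hseq⟩
        have h2 : (y.1 : A) * t = x.1 * t * s := hseq
        refine ⟨fun h => hne2 (by rw [h]), t * s * t⁻¹,
          hadm t s hs, (conj_shift' x.1 y.1 t s).mp h2⟩
      · rintro ⟨hne2, s, hs, hseq⟩
        refine ⟨fun h => hne2 (mul_right_cancel h), t⁻¹ * s * t, ?_, ?_⟩
        · have := hadm t⁻¹ s hs
          simpa using this
        · show (y.1 : A) * t = x.1 * t * (t⁻¹ * s * t)
          rw [hseq]; group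
    · intro x
      exact hAdjT x.1 t ht
end
end
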